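/- arXiv:1309.3942 — 3 statements merged into one kernel-verified Lean document; each statement's English description precedes it below -/
import Mathlib

section
/- Let a, b, c be distinct positive integers with gcd(a,b,c) = 1. Then the equation 1 + e^{2πiaξ} + e^{2πibξ} + e^{2πicξ} = 0 has a real solution ξ if and only if exactly two of a, b, c are odd and one is even. -/
open MeasureTheory Finset Polynomial
open scoped Classical

noncomputable section

/-- The self-similar set `K(b, D)`, i.e. the attractor of the IFS
`{x ↦ (x+d)/b : d ∈ D}`, described by radix expansions. -/
def Kset (b : ℕ) (D : Finset ℤ) : Set ℝ :=
  {x : ℝ | ∃ f : ℕ → ℤ, (∀ n, f n ∈ D) ∧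
    HasSum (fun n : ℕ => (f n : ℝ) / (b : ℝ) ^ (n + 1)) x}

/-- `J` is a tiling set for `K`: translates of `K` by `J` cover `ℝ` up to a null
set and overlap in null sets. -/
def IsTilingSet (J K : Set ℝ) : Prop :=
  J.Countable ∧
  volume ((⋃ t ∈ J, (fun x : ℝ => x + t) '' K)ᶜ) = 0 ∧
  ∀ t₁ ∈ J, ∀ t₂ ∈ J, t₁ ≠ t₂ →
    volume (((fun x : ℝ => x + t₁) '' K) ∩ ((fun x : ℝ => x + t₂) '' K)) = 0

def IsTile (K : Set ℝ) : Prop := ∃ J : Set ℝ, IsTilingSet J K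

/-- The exponential `e_λ(x) = exp(2πiλx)`. -/
def expChar (lam x : ℝ) : ℂ :=
  Complex.exp (2 * (Real.pi : ℂ) * Complex.I * (lam : ℂ) * (x : ℂ))

/-- The exponentials indexed by `Λ` are pairwise orthogonal in `L²(μ)`. -/
def IsOrthogonalSetFor (Λ : Set ℝ) (μ : Measure ℝ) : Prop :=
  ∀ l₁ ∈ Λ, ∀ l₂ ∈ Λ, l₁ ≠ l₂ →
    ∫ x : ℝ, expChar l₁ x * (starRingEnd ℂ) (expChar l₂ x) ∂μ = 0

/-- `Λ` is a spectrum of the measure `μ`: `0 ∈ Λ`, the exponentials `e_λ, λ ∈ Λ`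
are pairwise orthogonal in `L²(μ)`, and their span is dense in `L²(μ)`
(equivalently, only the zero element of `L²(μ)` is orthogonal to all of them). -/
def IsSpectrumOfMeasure (Λ : Set ℝ) (μ : Measure ℝ) : Prop :=
  Λ.Countable ∧ (0 : ℝ) ∈ Λ ∧ IsOrthogonalSetFor Λ μ ∧
  ∀ f : ℝ → ℂ, MemLp f 2 μ →
    (∀ lam ∈ Λ, ∫ x : ℝ, f x * (starRingEnd ℂ) (expChar lam x) ∂μ = 0) →
    f =ᵐ[μ] 0

/-- A set of positive finite Lebesgue measure is spectral if `L²(K)` admits an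
orthogonal family of exponentials spanning a dense subspace. -/
def IsSpectralSet (K : Set ℝ) : Prop :=
  ∃ Λ : Set ℝ, IsSpectrumOfMeasure Λ (volume.restrict K)

/-- `Γ` is a spectrum of the finite set `A ⊂ ℤ` (w.r.t. the normalized counting
measure on `A`): `#Γ = #A` and the exponentials are pairwise orthogonal. -/
def IsSpectrumOfIntFinset (Γ : Finset ℝ) (A : Finset ℤ) : Prop :=
  Γ.card = A.card ∧
  ∀ l₁ ∈ Γ, ∀ l₂ ∈ Γ, l₁ ≠ l₂ →
    ∑ a ∈ A, Complex.exp (2 * (Real.pi : ℂ) * Complex.I * ((l₁ - l₂ : ℝ) : ℂ) * (a : ℂ)) = 0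

def IsSpectralIntFinset (A : Finset ℤ) : Prop :=
  ∃ Γ : Finset ℝ, IsSpectrumOfIntFinset Γ A

/-- `μ` is the self-similar measure of the pair `(b, D)`. -/
def IsSelfSimilarMeasure (b : ℕ) (D : Finset ℤ) (μ : Measure ℝ) : Prop :=
  IsProbabilityMeasure μ ∧
  μ = (D.card : ENNReal)⁻¹ • ∑ d ∈ D, Measure.map (fun x : ℝ => (x + (d : ℝ)) / (b : ℝ)) μ

/-- `A` is an integer tile: `A ⊕ B ≡ ℤ_n (mod n)` for some `n` and finite `B`. -/
def IsIntegerTile (A : Finset ℤ) : Prop :=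
  ∃ n : ℕ, 0 < n ∧ ∃ B : Finset ℤ,
    ∀ r : ZMod n, ∃! p : ℤ × ℤ, p.1 ∈ A ∧ p.2 ∈ B ∧ ((p.1 + p.2 : ℤ) : ZMod n) = r

/-- The sumset `E 0 + E 1 + ⋯ + E k`. -/
def famSum (k : ℕ) (E : ℕ → Finset ℤ) : Finset ℤ :=
  (Fintype.piFinset fun i : Fin (k + 1) => E i.val).image fun f => ∑ i, f i

/-- The sum `E 0 ⊕ E 1 ⊕ ⋯ ⊕ E k` is direct: all sums are distinct. -/
def FamilyUniqueSums (k : ℕ) (E : ℕ → Finset ℤ) : Prop :=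
  ∀ f g : Fin (k + 1) → ℤ, (∀ i, f i ∈ E i.val) → (∀ i, g i ∈ E i.val) →
    ∑ i, f i = ∑ i, g i → f = g

/-- `F` is a complete residue system modulo `b`. -/
def IsCompleteResidueSystem (b : ℕ) (F : Finset ℤ) : Prop :=
  ∀ r : ZMod b, ∃! x, x ∈ F ∧ (x : ZMod b) = r

/-- The product-form digit set `D = E₀ + b^{ℓ₁}E₁ + ⋯ + b^{ℓ_k}E_k` (with `ℓ 0 = 0`). -/
def Dprod (b k : ℕ) (E : ℕ → Finset ℤ) (ℓ : ℕ → ℕ) : Finset ℤ :=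
  (Fintype.piFinset fun i : Fin (k + 1) => E i.val).image
    fun f => ∑ i, (b : ℤ) ^ (ℓ i.val) * f i

/-- The sum defining the product form is direct. -/
def ProdFormDirect (b k : ℕ) (E : ℕ → Finset ℤ) (ℓ : ℕ → ℕ) : Prop :=
  ∀ f g : Fin (k + 1) → ℤ, (∀ i, f i ∈ E i.val) → (∀ i, g i ∈ E i.val) →
    ∑ i, (b : ℤ) ^ (ℓ i.val) * f i = ∑ i, (b : ℤ) ^ (ℓ i.val) * g i → f = g

/-- The set `A = ⊕_{i} ⊕_{j=0}^{ℓ_i - 1} b^j E_i` (the `i = 0` term is void when `ℓ 0 = 0`). -/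
def Aset (b k : ℕ) (E : ℕ → Finset ℤ) (ℓ : ℕ → ℕ) : Finset ℤ :=
  (Fintype.piFinset fun q : Σ i : Fin (k + 1), Fin (ℓ i.val) => E q.1.val).image
    fun f => ∑ q : Σ i : Fin (k + 1), Fin (ℓ i.val), (b : ℤ) ^ (q.2 : ℕ) * f q

/-- Mask polynomial `P_F(x) = ∑_{d ∈ F} x^d` of a finite set of nonnegative integers. -/
def maskPoly (F : Finset ℤ) : Polynomial ℤ := ∑ d ∈ F, Polynomial.X ^ d.toNat

/-- `Ψ(x) = ∏_{d ∈ S} Φ_d(x)` where `S = {d > 1 : d ∣ b, Φ_d ∣ P_F}`. -/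
def PsiPoly (b : ℕ) (F : Finset ℤ) : Polynomial ℤ :=
  ∏ d ∈ b.divisors.filter (fun d => 1 < d ∧ cyclotomic d ℤ ∣ maskPoly F), cyclotomic d ℤ

/-- `K_D^{(i)}(x) = Ψ₀(x)Ψ₁(x^{b^{ℓ₁}}) ⋯ Ψ_i(x^{b^{ℓ_i}})`. -/
def Kpoly (b : ℕ) (E : ℕ → Finset ℤ) (ℓ : ℕ → ℕ) (i : ℕ) : Polynomial ℤ :=
  ∏ j ∈ Finset.range (i + 1), Polynomial.expand ℤ (b ^ (ℓ j)) (PsiPoly b (E j))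

/-- `nIdx Q = lcm {s ≥ 1 : Φ_s ∣ Q}` (any `s` with `Φ_s ∣ Q` satisfies
`φ(s) ≤ deg Q`, hence `s ≤ 2 (deg Q + 1)²`, so the range is exhaustive). -/
def nIdx (Q : Polynomial ℤ) : ℕ :=
  ((Finset.Icc 1 (2 * (Q.natDegree + 1) ^ 2)).filter fun s => cyclotomic s ℤ ∣ Q).lcm id

/-- `F' ≡ F (mod n)`: each element of `F` is changed by some integer multiple of `n`
(keeping the elements distinct). -/
def ModSet (n : ℕ) (F F' : Finset ℤ) : Prop :=
  ∃ g : ℤ → ℤ, F' = F.image g ∧ (∀ x ∈ F, (n : ℤ) ∣ g x - x) ∧ F'.card = F.card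

/-- The sumset `Dprev + b^{ℓi} Ei`. -/
def stepSum (b : ℕ) (ℓi : ℕ) (Dprev Ei : Finset ℤ) : Finset ℤ :=
  (Dprev ×ˢ Ei).image fun p => p.1 + (b : ℤ) ^ ℓi * p.2

/-- The sum `Dprev ⊕ b^{ℓi} Ei` is direct. -/
def StepDirect (b : ℕ) (ℓi : ℕ) (Dprev Ei : Finset ℤ) : Prop :=
  ∀ d₁ ∈ Dprev, ∀ e₁ ∈ Ei, ∀ d₂ ∈ Dprev, ∀ e₂ ∈ Ei,
    d₁ + (b : ℤ) ^ ℓi * e₁ = d₂ + (b : ℤ) ^ ℓi * e₂ → d₁ = d₂ ∧ e₁ = e₂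

/-- `Dseq` is the sequence `D^{(0)}, …, D^{(k)}` of the modulo product-form
construction for `E₀ ⊕ ⋯ ⊕ E_k = ℤ_b` and `0 = ℓ₀ ≤ ℓ₁ ≤ ⋯ ≤ ℓ_k`:
`D^{(0)} ≡ E₀ (mod n₀)` and `D^{(i)} ≡ D^{(i-1)} ⊕ b^{ℓ_i}E_i (mod n_i)`. -/
def IsModuloProductForm (b k : ℕ) (E : ℕ → Finset ℤ) (ℓ : ℕ → ℕ)
    (Dseq : ℕ → Finset ℤ) : Prop :=
  famSum k E = (Finset.range b).image (fun j => (j : ℤ)) ∧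
  FamilyUniqueSums k E ∧
  ℓ 0 = 0 ∧ (∀ i j, i ≤ j → j ≤ k → ℓ i ≤ ℓ j) ∧
  ModSet (nIdx (Kpoly b E ℓ 0)) (E 0) (Dseq 0) ∧
  ∀ i, 1 ≤ i → i ≤ k →
    StepDirect b (ℓ i) (Dseq (i - 1)) (E i) ∧
    ModSet (nIdx (Kpoly b E ℓ i)) (stepSum b (ℓ i) (Dseq (i - 1)) (E i)) (Dseq i)

/-- The double sum `⊕_{i=0}^{k-1} ⊕_{j=t_i}^{t_{i+1}-1} b^j F(k-i-1)`. -/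
def doubleSum (b k : ℕ) (t : ℕ → ℕ) (F : ℕ → Finset ℤ) : Finset ℤ :=
  (Fintype.piFinset
      (fun q : Σ i : Fin k, {j : ℕ // j ∈ Finset.Ico (t i.val) (t (i.val + 1))} =>
        F (k - q.1.val - 1))).image
    fun f => ∑ q : Σ i : Fin k, {j : ℕ // j ∈ Finset.Ico (t i.val) (t (i.val + 1))},
      (b : ℤ) ^ (q.2.val) * f q

/-- `𝒞_i = p̃_{i-1}·{0, 1, …, p_i − 1}` where `p̃_{i-1} = p₀⋯p_{i-1}`. -/
def Cset (p : ℕ → ℕ) (i : ℕ) : Finset ℤ :=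
  (Finset.range (p i)).image fun j => (∏ l ∈ Finset.range i, (p l : ℤ)) * j

/-- The set of zeros of `ξ ↦ 1 + e^{2πiaξ} + e^{2πibξ} + e^{2πicξ}`. -/
def maskZeroSet (a b c : ℤ) : Set ℝ :=
  {ξ : ℝ | (1 : ℂ) + Complex.exp (2 * (Real.pi : ℂ) * Complex.I * (a : ℂ) * (ξ : ℂ))
      + Complex.exp (2 * (Real.pi : ℂ) * Complex.I * (b : ℂ) * (ξ : ℂ))
      + Complex.exp (2 * (Real.pi : ℂ) * Complex.I * (c : ℂ) * (ξ : ℂ)) = 0}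

/-- `(1/q)𝕆 = {m/q : m odd}`. -/
def oddFracSet (q : ℝ) : Set ℝ := {x | ∃ m : ℤ, Odd m ∧ x = (m : ℝ) / q}

/-- `⋃_{n ≥ 1} 4^n (1/q)𝕆`. -/
def Zsc (q : ℝ) : Set ℝ :=
  {x | ∃ n : ℕ, 1 ≤ n ∧ ∃ m : ℤ, Odd m ∧ x = (4 : ℝ) ^ n * (m : ℝ) / q}

lemma expNegOneIff (t : ℤ) (ξ : ℝ) :
    Complex.exp (2 * (Real.pi : ℂ) * Complex.I * (t : ℂ) * (ξ : ℂ)) = -1 ↔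
    ∃ n : ℤ, 2 * (t : ℝ) * ξ = 2 * n + 1 := by
  rw [show (-1:ℂ) = Complex.exp ((Real.pi:ℂ) * Complex.I) from Complex.exp_pi_mul_I.symm,
    Complex.exp_eq_exp_iff_exists_int]
  have hπI : ((Real.pi:ℂ) * Complex.I) ≠ 0 := by
    simp [Real.pi_ne_zero, Complex.I_ne_zero]
  constructor
  · rintro ⟨n, hn⟩
    refine ⟨n, ?_⟩
    have h2 : ((2 * (t:ℝ) * ξ : ℝ) : ℂ) * ((Real.pi:ℂ) * Complex.I)
        = ((2 * (n:ℝ) + 1 : ℝ) : ℂ) * ((Real.pi:ℂ) * Complex.I) := by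
      push_cast
      linear_combination hn
    have h3 := mul_right_cancel₀ hπI h2
    have h4 := Complex.ofReal_inj.mp h3
    push_cast at h4 ⊢
    linarith
  · rintro ⟨n, hn⟩
    refine ⟨n, ?_⟩
    have h2 : ((2 * (t:ℝ) * ξ : ℝ) : ℂ) = ((2 * (n:ℝ) + 1 : ℝ) : ℂ) := by
      exact_mod_cast congrArg (fun x : ℝ => (x : ℂ))
        (by push_cast; linarith : (2 * (t:ℝ) * ξ : ℝ) = (2 * (n:ℝ) + 1 : ℝ))
    push_cast at h2
    linear_combination ((Real.pi:ℂ) * Complex.I) * h2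

lemma expHalf (t : ℤ) :
    Complex.exp (2 * (Real.pi : ℂ) * Complex.I * (t : ℂ) * (((1:ℝ)/2 : ℝ) : ℂ)) = (-1 : ℂ) ^ t := by
  rw [show (2 * (Real.pi : ℂ) * Complex.I * (t : ℂ) * (((1:ℝ)/2 : ℝ) : ℂ))
      = (t : ℂ) * ((Real.pi:ℂ) * Complex.I) by push_cast; ring,
    Complex.exp_int_mul, Complex.exp_pi_mul_I]

lemma conjzL (t : ℤ) (ξ : ℝ) :
    (starRingEnd ℂ) (2 * (Real.pi:ℂ) * Complex.I * (t:ℂ) * (ξ:ℂ))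
      = -(2 * (Real.pi:ℂ) * Complex.I * (t:ℂ) * (ξ:ℂ)) := by
  simp only [map_mul, Complex.conj_I, Complex.conj_ofReal, map_ofNat, map_intCast]
  ring

lemma finishPar (a b c : ℤ) (hgcd : Int.gcd a (Int.gcd b c) = 1)
    (h : (2:ℤ) ∣ (a - (b - c)) ∨ (2:ℤ) ∣ (b - (a - c)) ∨ (2:ℤ) ∣ (c - (a - b))) :
    (Odd a ∧ Odd b ∧ Even c) ∨ (Odd a ∧ Even b ∧ Odd c) ∨
      (Even a ∧ Odd b ∧ Odd c) := by
  have hne : ¬((2:ℤ) ∣ a ∧ (2:ℤ) ∣ b ∧ (2:ℤ) ∣ c) := by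
    rintro ⟨ha2, hb2, hc2⟩
    have h1 := Int.dvd_coe_gcd ha2 (Int.dvd_coe_gcd hb2 hc2)
    rw [hgcd] at h1
    norm_num at h1
  simp only [Int.even_iff, Int.odd_iff]
  omega


theorem stmt13 (a b c : ℤ) (ha : 0 < a) (hb : 0 < b) (hc : 0 < c)
    (hab : a ≠ b) (hac : a ≠ c) (hbc : b ≠ c)
    (hgcd : Int.gcd a (Int.gcd b c) = 1) :
    (∃ ξ : ℝ, ξ ∈ maskZeroSet a b c) ↔
      ((Odd a ∧ Odd b ∧ Even c) ∨ (Odd a ∧ Even b ∧ Odd c) ∨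
        (Even a ∧ Odd b ∧ Odd c)) := by
  constructor
  · rintro ⟨ξ, hξ⟩
    simp only [maskZeroSet, Set.mem_setOf_eq] at hξ
    set za := 2 * (Real.pi:ℂ) * Complex.I * (a:ℂ) * (ξ:ℂ) with hza
    set zb := 2 * (Real.pi:ℂ) * Complex.I * (b:ℂ) * (ξ:ℂ) with hzb
    set zc := 2 * (Real.pi:ℂ) * Complex.I * (c:ℂ) * (ξ:ℂ) with hzc
    set u := Complex.exp za with hud
    set v := Complex.exp zb with hvd
    set w := Complex.exp zc with hwd
    have hc0 : (1:ℂ) + Complex.exp (-za) + Complex.exp (-zb) + Complex.exp (-zc) = 0 := by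
      have h0 := congrArg (starRingEnd ℂ) hξ
      simp only [map_add, map_one, map_zero, hud, hvd, hwd, ← Complex.exp_conj] at h0
      rw [show (starRingEnd ℂ) za = -za from by rw [hza]; exact conjzL a ξ,
        show (starRingEnd ℂ) zb = -zb from by rw [hzb]; exact conjzL b ξ,
        show (starRingEnd ℂ) zc = -zc from by rw [hzc]; exact conjzL c ξ] at h0
      exact h0
    have hu : u * Complex.exp (-za) = 1 := by
      rw [hud, ← Complex.exp_add]; simp
    have hv : v * Complex.exp (-zb) = 1 := by
      rw [hvd, ← Complex.exp_add]; simp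
    have hw : w * Complex.exp (-zc) = 1 := by
      rw [hwd, ← Complex.exp_add]; simp
    have h2 : u*v*w * ((1:ℂ) + Complex.exp (-za) + Complex.exp (-zb) + Complex.exp (-zc)) = 0 := by
      rw [hc0, mul_zero]
    have h2' : u*v*w + v*w + u*w + u*v = 0 := by
      linear_combination h2 - v*w*hu - u*w*hv - u*v*hw
    have hprod : (1+u)*(1+v)*(1+w) = 0 := by
      linear_combination hξ + h2'
    apply finishPar a b c hgcd
    rcases mul_eq_zero.mp hprod with h | h
    · rcases mul_eq_zero.mp h with h | h
      · -- u = -1, v = -w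
        left
        have hu' : Complex.exp za = -1 := by rw [← hud]; linear_combination h
        have hvw : v = -w := by linear_combination hξ - h
        have hbc' : Complex.exp (2*(Real.pi:ℂ)*Complex.I*((b - c : ℤ):ℂ)*(ξ:ℂ)) = -1 := by
          rw [show (2*(Real.pi:ℂ)*Complex.I*((b-c:ℤ):ℂ)*(ξ:ℂ)) = zb - zc by
            rw [hzb, hzc]; push_cast; ring]
          rw [Complex.exp_sub, ← hvd, ← hwd, hvw, neg_div, div_self (by rw [hwd]; exact Complex.exp_ne_zero _)]
        obtain ⟨n, hn⟩ := (expNegOneIff a ξ).mp hu'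
        obtain ⟨m, hm⟩ := (expNegOneIff (b - c) ξ).mp hbc'
        push_cast at hm
        have heqR : ((2*(n:ℝ)+1)*((b:ℝ)-c)) = (a:ℝ)*(2*(m:ℝ)+1) := by
          linear_combination (-(b:ℝ)+(c:ℝ))*hn + (a:ℝ)*hm
        have heq : (2*n+1)*(b-c) = a*(2*m+1) := by exact_mod_cast heqR
        exact ⟨n*(b-c) - a*m, by linear_combination -heq⟩
      · -- v = -1, u = -w
        right; left
        have hv' : Complex.exp zb = -1 := by rw [← hvd]; linear_combination h
        have huw : u = -w := by linear_combination hξ - h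
        have hac' : Complex.exp (2*(Real.pi:ℂ)*Complex.I*((a - c : ℤ):ℂ)*(ξ:ℂ)) = -1 := by
          rw [show (2*(Real.pi:ℂ)*Complex.I*((a-c:ℤ):ℂ)*(ξ:ℂ)) = za - zc by
            rw [hza, hzc]; push_cast; ring]
          rw [Complex.exp_sub, ← hud, ← hwd, huw, neg_div, div_self (by rw [hwd]; exact Complex.exp_ne_zero _)]
        obtain ⟨n, hn⟩ := (expNegOneIff b ξ).mp hv'
        obtain ⟨m, hm⟩ := (expNegOneIff (a - c) ξ).mp hac'
        push_cast at hm
        have heqR : ((2*(n:ℝ)+1)*((a:ℝ)-c)) = (b:ℝ)*(2*(m:ℝ)+1) := by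
          linear_combination (-(a:ℝ)+(c:ℝ))*hn + (b:ℝ)*hm
        have heq : (2*n+1)*(a-c) = b*(2*m+1) := by exact_mod_cast heqR
        exact ⟨n*(a-c) - b*m, by linear_combination -heq⟩
    · -- w = -1, u = -v
      right; right
      have hw' : Complex.exp zc = -1 := by rw [← hwd]; linear_combination h
      have huv : u = -v := by linear_combination hξ - h
      have hab' : Complex.exp (2*(Real.pi:ℂ)*Complex.I*((a - b : ℤ):ℂ)*(ξ:ℂ)) = -1 := by
        rw [show (2*(Real.pi:ℂ)*Complex.I*((a-b:ℤ):ℂ)*(ξ:ℂ)) = za - zb by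
          rw [hza, hzb]; push_cast; ring]
        rw [Complex.exp_sub, ← hud, ← hvd, huv, neg_div, div_self (by rw [hvd]; exact Complex.exp_ne_zero _)]
      obtain ⟨n, hn⟩ := (expNegOneIff c ξ).mp hw'
      obtain ⟨m, hm⟩ := (expNegOneIff (a - b) ξ).mp hab'
      push_cast at hm
      have heqR : ((2*(n:ℝ)+1)*((a:ℝ)-b)) = (c:ℝ)*(2*(m:ℝ)+1) := by
        linear_combination (-(a:ℝ)+(b:ℝ))*hn + (c:ℝ)*hm
      have heq : (2*n+1)*(a-b) = c*(2*m+1) := by exact_mod_cast heqR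
      exact ⟨n*(a-b) - c*m, by linear_combination -heq⟩
  · intro hpar
    refine ⟨(1:ℝ)/2, ?_⟩
    simp only [maskZeroSet, Set.mem_setOf_eq]
    rw [expHalf a, expHalf b, expHalf c]
    rcases hpar with ⟨h1, h2, h3⟩ | ⟨h1, h2, h3⟩ | ⟨h1, h2, h3⟩ <;>
      rw [h1.neg_one_zpow, h2.neg_one_zpow, h3.neg_one_zpow] <;> ring


end
end

section
/- Let D = {0, a, b, c} with 0 < a < c odd, b even, gcd(a,b,c) = 1, b = 2^t ℓ, c − a = 2^{t'} ℓ' (t, t' ≥ 1, ℓ, ℓ' odd). Then the set of real zeros of ξ ↦ 1 + e^{2πiaξ} + e^{2πibξ} + e^{2πicξ} equals R₁ ∪ R₂ ∪ R₃ if t = t', and equals R₁ ∪ R₂ if t ≠ t'. -/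
open MeasureTheory Finset Polynomial
open scoped Classical

noncomputable section

private def Efn (r : ℝ) : ℂ := Complex.exp (2 * (Real.pi : ℂ) * Complex.I * (r : ℂ))

private lemma Efn_ne_zero (r : ℝ) : Efn r ≠ 0 := Complex.exp_ne_zero _

private lemma Efn_add (r s : ℝ) : Efn (r + s) = Efn r * Efn s := by
  rw [Efn, Efn, Efn, ← Complex.exp_add]; congr 1; push_cast; ring

private lemma Efn_zero : Efn 0 = 1 := by simp [Efn]

private lemma Efn_mul_neg (r : ℝ) : Efn r * Efn (-r) = 1 := by
  rw [← Efn_add]; simp [Efn_zero]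

private lemma Efn_eq_one_iff (r : ℝ) : Efn r = 1 ↔ ∃ n : ℤ, r = n := by
  rw [Efn, Complex.exp_eq_one_iff]
  constructor
  · rintro ⟨n, hn⟩
    refine ⟨n, ?_⟩
    have h2 : (2 * (Real.pi : ℂ) * Complex.I) ≠ 0 := by
      simp [Real.pi_ne_zero, Complex.I_ne_zero]
    have h : (2 * (Real.pi:ℂ) * Complex.I) * (r:ℂ) = (2 * (Real.pi:ℂ) * Complex.I) * (n:ℂ) := by
      rw [mul_comm ((n:ℂ)) _] at hn
      linear_combination hn
    have := mul_left_cancel₀ h2 h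
    exact_mod_cast this
  · rintro ⟨n, hn⟩; exact ⟨n, by rw [hn]; push_cast; ring⟩

private lemma Efn_half : Efn (1/2) = -1 := by
  rw [Efn, show 2*(Real.pi:ℂ)*Complex.I*(((1:ℝ)/2:ℝ):ℂ) = Real.pi * Complex.I by push_cast; ring]
  exact Complex.exp_pi_mul_I

private lemma Efn_eq_neg_one_iff (r : ℝ) : Efn r = -1 ↔ ∃ m : ℤ, Odd m ∧ r = m / 2 := by
  have key : Efn (r + 1/2) = Efn r * -1 := by rw [Efn_add, Efn_half]
  constructor
  · intro h
    have h1 : Efn (r + 1/2) = 1 := by rw [key, h]; ring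
    obtain ⟨n, hn⟩ := (Efn_eq_one_iff _).1 h1
    exact ⟨2*n - 1, ⟨n - 1, by ring⟩, by push_cast; linarith⟩
  · rintro ⟨m, ⟨s, hs⟩, hr⟩
    have h1 : Efn (r + 1/2) = 1 := (Efn_eq_one_iff _).2 ⟨s + 1, by rw [hr, hs]; push_cast; try ring⟩
    linear_combination - (key.symm.trans h1)

private lemma Efn_conj (r : ℝ) : (starRingEnd ℂ) (Efn r) = Efn (-r) := by
  rw [Efn, Efn, ← Complex.exp_conj]
  congr 1
  push_cast
  simp only [map_mul, Complex.conj_I, Complex.conj_ofReal, map_ofNat]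
  ring

private lemma Efn_sub_eq_neg_one {r s : ℝ} (h : Efn r + Efn s = 0) : Efn (s - r) = -1 := by
  have h1 : Efn (s - r) = Efn s * Efn (-r) := by rw [← Efn_add]; congr 1; try ring
  have h2 : Efn s = -Efn r := by linear_combination h
  rw [h1, h2]
  linear_combination - (Efn_mul_neg r)

private lemma add_eq_zero_of_Efn {r s : ℝ} (h : Efn (s - r) = -1) : Efn r + Efn s = 0 := by
  have h1 : Efn s = Efn (s - r) * Efn r := by rw [← Efn_add]; congr 1; try ring
  rw [h1, h]; ring

private lemma pairing (u v w x : ℂ) (hv : v ≠ 0) (hw : w ≠ 0) (hx : x ≠ 0)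
    (h1 : u + v + w + x = 0)
    (h3 : u*v*w + u*v*x + u*w*x + v*w*x = 0) :
    (u + v = 0 ∧ w + x = 0) ∨ (u + w = 0 ∧ v + x = 0) ∨ (u + x = 0 ∧ v + w = 0) := by
  have h3' : (u + v) * (w*x - u*v) = 0 := by linear_combination h3 - u*v*h1
  have h3'' : (u + w) * (v*x - u*w) = 0 := by linear_combination h3 - u*w*h1
  rcases mul_eq_zero.1 h3' with h | h
  · exact Or.inl ⟨h, by linear_combination h1 - h⟩
  rcases mul_eq_zero.1 h3'' with h' | h'
  · exact Or.inr (Or.inl ⟨h', by linear_combination h1 - h'⟩)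
  have hvw : (v - w) * ((v + w) * x) = 0 := by linear_combination v*h' - w*h
  rcases mul_eq_zero.1 hvw with h0 | h0
  · -- v = w
    have hveq : v = w := by linear_combination h0
    have hwxu : w * (x - u) = 0 := by linear_combination h + u*hveq
    have hxu : x = u := by
      rcases mul_eq_zero.1 hwxu with h2 | h2
      · exact absurd h2 hw
      · linear_combination h2
    have huv : u + v = 0 := by linear_combination h1/2 + hveq/2 - hxu/2
    exact Or.inl ⟨huv, by linear_combination h1 - huv⟩
  · rcases mul_eq_zero.1 h0 with h0' | h0'
    · exact Or.inr (Or.inr ⟨by linear_combination h1 - h0', h0'⟩)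
    · exact absurd h0' hx

private lemma odd_ne_zero {m : ℤ} (hm : Odd m) : m ≠ 0 := by
  rintro rfl
  exact (Int.not_odd_iff_even.mpr Even.zero) hm

private lemma odd_of_dvd {d m : ℤ} (hdvd : d ∣ m) (hm : Odd m) : Odd d := by
  rcases Int.even_or_odd d with he | ho
  · obtain ⟨e, rfl⟩ := hdvd
    exact absurd hm (Int.not_odd_iff_even.mpr (he.mul_right e))
  · exact ho

private lemma gcd_char (m n : ℤ) (hm : Odd m) (hn : Odd n) (ξ : ℝ) :
    ((∃ j : ℤ, Odd j ∧ (m:ℝ) * ξ = j / 2) ∧ (∃ k : ℤ, Odd k ∧ (n:ℝ) * ξ = k / 2)) ↔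
    (∃ p : ℤ, Odd p ∧ ξ = p / (2 * (Int.gcd m n : ℝ))) := by
  have hm0 : m ≠ 0 := odd_ne_zero hm
  have hg : 0 < Int.gcd m n := Int.gcd_pos_iff.mpr (Or.inl hm0)
  set g : ℤ := (Int.gcd m n : ℤ) with hgdef
  have hgR : (0:ℝ) < (Int.gcd m n : ℝ) := by exact_mod_cast hg
  have hg0 : g ≠ 0 := by positivity
  set m' : ℤ := m / g with hm'def
  set n' : ℤ := n / g with hn'def
  have hmm : g * m' = m := Int.mul_ediv_cancel' (Int.gcd_dvd_left m n)
  have hnn : g * n' = n := Int.mul_ediv_cancel' (Int.gcd_dvd_right m n)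
  have hm'odd : Odd m' := odd_of_dvd ⟨g, by rw [← hmm]; ring⟩ hm
  have hn'odd : Odd n' := odd_of_dvd ⟨g, by rw [← hnn]; ring⟩ hn
  have coprime : Int.gcd m' n' = 1 := Int.gcd_div_gcd_div_gcd hg
  have hmr : (m:ℝ) = (Int.gcd m n : ℝ) * ((m':ℤ):ℝ) := by exact_mod_cast hmm.symm
  have hnr : (n:ℝ) = (Int.gcd m n : ℝ) * ((n':ℤ):ℝ) := by exact_mod_cast hnn.symm
  have hm'R : ((m':ℤ):ℝ) ≠ 0 := by exact_mod_cast odd_ne_zero hm'odd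
  constructor
  · rintro ⟨⟨j, hj, hjξ⟩, ⟨k, hk, hkξ⟩⟩
    have creal : (n:ℝ) * j = (m:ℝ) * k := by
      linear_combination (-(2*(n:ℝ)))*hjξ + (2*(m:ℝ))*hkξ
    have cint : n * j = m * k := by exact_mod_cast creal
    have cint' : n' * j = m' * k := by
      apply mul_left_cancel₀ hg0
      calc g * (n' * j) = n * j := by rw [← hnn]; ring
      _ = m * k := cint
      _ = g * (m' * k) := by rw [← hmm]; ring
    have hdvd : m' ∣ j := by
      have h1 : m' ∣ n' * j := Dvd.intro k cint'.symm
      have hco : IsCoprime m' n' := Int.isCoprime_iff_gcd_eq_one.mpr coprime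
      exact hco.dvd_of_dvd_mul_left h1
    obtain ⟨p, hp⟩ := hdvd
    have hpodd : Odd p := by
      rcases Int.even_or_odd p with he | ho
      · exact absurd hj (Int.not_odd_iff_even.mpr (by rw [hp]; exact he.mul_left m'))
      · exact ho
    refine ⟨p, hpodd, ?_⟩
    rw [eq_div_iff (by positivity)]
    apply mul_left_cancel₀ hm'R
    have hjr : (j:ℝ) = ((m':ℤ):ℝ) * (p:ℝ) := by exact_mod_cast hp
    linear_combination 2*hjξ - 2*ξ*hmr + hjr
  · rintro ⟨p, hp, hξ⟩
    constructor
    · refine ⟨m' * p, hm'odd.mul hp, ?_⟩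
      rw [hξ, hmr]
      push_cast
      field_simp
    · refine ⟨n' * p, hn'odd.mul hp, ?_⟩
      rw [hξ, hnr]
      push_cast
      field_simp

private lemma gcd_char_pow (t : ℕ) (m n : ℤ) (hm : Odd m) (hn : Odd n) (ξ : ℝ) :
    ((∃ j : ℤ, Odd j ∧ ((2^t * m : ℤ):ℝ) * ξ = j / 2) ∧
     (∃ k : ℤ, Odd k ∧ ((2^t * n : ℤ):ℝ) * ξ = k / 2)) ↔
    (∃ p : ℤ, Odd p ∧ ξ = p / (2 ^ (t+1) * (Int.gcd m n : ℝ))) := by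
  have hg : 0 < Int.gcd m n := Int.gcd_pos_iff.mpr (Or.inl (odd_ne_zero hm))
  have hgR : (0:ℝ) < (Int.gcd m n : ℝ) := by exact_mod_cast hg
  have e1 : ∀ r : ℤ, ((2^t * r : ℤ):ℝ) * ξ = (r:ℝ) * (2^t * ξ) := by
    intro r; push_cast; ring
  have h := gcd_char m n hm hn (2^t * ξ)
  rw [e1 m, e1 n] at *
  rw [h]
  constructor <;> rintro ⟨p, hp, hpe⟩ <;> refine ⟨p, hp, ?_⟩
  · rw [eq_div_iff (by positivity)] at hpe ⊢
    linear_combination hpe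
  · rw [eq_div_iff (by positivity)] at hpe ⊢
    linear_combination hpe

private lemma two_pow_factor_ne (s s' : ℕ) (hss : s < s') (X Y : ℤ) (hX : Odd X)
    (hY : Odd Y) : 2^s' * X ≠ 2^s * Y := by
  intro heq
  have h1 : (2:ℤ)^s * (2^(s'-s) * X) = 2^s * Y := by
    rw [← mul_assoc, ← pow_add]
    rw [show s + (s' - s) = s' by omega]
    exact heq
  have h2 := mul_left_cancel₀ (by positivity : ((2:ℤ)^s) ≠ 0) h1
  have heven : Even ((2:ℤ)^(s'-s) * X) := by
    have hpe : Even ((2:ℤ)^(s'-s)) := by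
      refine ⟨2^(s'-s-1), ?_⟩
      rw [← two_mul, ← pow_succ']
      congr 1
      omega
    exact hpe.mul_right X
  rw [h2] at heven
  exact (Int.not_odd_iff_even.mpr heven) hY

private lemma no_sol (t t' : ℕ) (htt : t ≠ t') (m n : ℤ) (hm : Odd m) (hn : Odd n) (ξ : ℝ) :
    ¬ ((∃ j : ℤ, Odd j ∧ ((2^t * m : ℤ):ℝ) * ξ = j / 2) ∧
       (∃ k : ℤ, Odd k ∧ ((2^t' * n : ℤ):ℝ) * ξ = k / 2)) := by
  rintro ⟨⟨j, hj, hjξ⟩, ⟨k, hk, hkξ⟩⟩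
  have creal : ((2^t' * n : ℤ):ℝ) * j = ((2^t * m : ℤ):ℝ) * k := by
    linear_combination (-(2*((2^t' * n : ℤ):ℝ)))*hjξ + (2*((2^t * m : ℤ):ℝ))*hkξ
  have cint : 2^t' * n * j = 2^t * m * k := by exact_mod_cast creal
  rcases Nat.lt_or_ge t t' with hlt | hge
  · exact two_pow_factor_ne t t' hlt (n*j) (m*k) (hn.mul hj) (hm.mul hk)
      (by rw [← mul_assoc, ← mul_assoc]; exact cint)
  · have hlt : t' < t := lt_of_le_of_ne hge (Ne.symm htt)
    exact two_pow_factor_ne t' t hlt (m*k) (n*j) (hm.mul hk) (hn.mul hj)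
      (by rw [← mul_assoc, ← mul_assoc]; exact cint.symm)

private lemma mask_mem_iff (a b c : ℤ) (ξ : ℝ) :
    ξ ∈ maskZeroSet a b c ↔
      ((∃ j : ℤ, Odd j ∧ ((a:ℤ):ℝ) * ξ = j/2) ∧ (∃ k : ℤ, Odd k ∧ ((c - b : ℤ):ℝ) * ξ = k/2)) ∨
      ((∃ j : ℤ, Odd j ∧ ((b:ℤ):ℝ) * ξ = j/2) ∧ (∃ k : ℤ, Odd k ∧ ((c - a : ℤ):ℝ) * ξ = k/2)) ∨
      ((∃ j : ℤ, Odd j ∧ ((c:ℤ):ℝ) * ξ = j/2) ∧ (∃ k : ℤ, Odd k ∧ ((b - a : ℤ):ℝ) * ξ = k/2)) := by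
  have key : ∀ r : ℤ, Complex.exp (2*(Real.pi:ℂ)*Complex.I*(r:ℂ)*(ξ:ℂ)) = Efn ((r:ℝ)*ξ) := by
    intro r; rw [Efn]; congr 1; push_cast; ring
  have hmem : ξ ∈ maskZeroSet a b c ↔
      1 + Efn ((a:ℝ)*ξ) + Efn ((b:ℝ)*ξ) + Efn ((c:ℝ)*ξ) = 0 := by
    simp only [maskZeroSet, Set.mem_setOf_eq, key]
  rw [hmem]
  set va := Efn ((a:ℝ)*ξ) with hva
  set vb := Efn ((b:ℝ)*ξ) with hvb
  set vc := Efn ((c:ℝ)*ξ) with hvc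
  have ecb : ((c - b : ℤ):ℝ) * ξ = (c:ℝ)*ξ - (b:ℝ)*ξ := by push_cast; ring
  have eca : ((c - a : ℤ):ℝ) * ξ = (c:ℝ)*ξ - (a:ℝ)*ξ := by push_cast; ring
  have eba : ((b - a : ℤ):ℝ) * ξ = (b:ℝ)*ξ - (a:ℝ)*ξ := by push_cast; ring
  constructor
  · intro h
    have hconj : 1 + Efn (-((a:ℝ)*ξ)) + Efn (-((b:ℝ)*ξ)) + Efn (-((c:ℝ)*ξ)) = 0 := by
      have := congrArg (starRingEnd ℂ) h
      simpa only [map_add, map_one, map_zero, Efn_conj, hva, hvb, hvc] using this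
    have h3 : 1*va*vb + 1*va*vc + 1*vb*vc + va*vb*vc = 0 := by
      linear_combination (va*vb*vc)*hconj - (vb*vc)*(Efn_mul_neg ((a:ℝ)*ξ))
        - (va*vc)*(Efn_mul_neg ((b:ℝ)*ξ)) - (va*vb)*(Efn_mul_neg ((c:ℝ)*ξ))
    rcases pairing 1 va vb vc (Efn_ne_zero _) (Efn_ne_zero _) (Efn_ne_zero _)
        (by linear_combination h) h3 with ⟨p1, p2⟩ | ⟨p1, p2⟩ | ⟨p1, p2⟩
    · refine Or.inl ⟨?_, ?_⟩
      · exact (Efn_eq_neg_one_iff _).1 (by linear_combination p1)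
      · rw [ecb]
        exact (Efn_eq_neg_one_iff _).1 (Efn_sub_eq_neg_one p2)
    · refine Or.inr (Or.inl ⟨?_, ?_⟩)
      · exact (Efn_eq_neg_one_iff _).1 (by linear_combination p1)
      · rw [eca]
        exact (Efn_eq_neg_one_iff _).1 (Efn_sub_eq_neg_one p2)
    · refine Or.inr (Or.inr ⟨?_, ?_⟩)
      · exact (Efn_eq_neg_one_iff _).1 (by linear_combination p1)
      · rw [eba]
        exact (Efn_eq_neg_one_iff _).1 (Efn_sub_eq_neg_one p2)
  · rintro (⟨hA, hB⟩ | ⟨hA, hB⟩ | ⟨hA, hB⟩)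
    · have h1 : va = -1 := (Efn_eq_neg_one_iff _).2 hA
      rw [ecb] at hB
      have h2 : vb + vc = 0 := add_eq_zero_of_Efn ((Efn_eq_neg_one_iff _).2 hB)
      linear_combination h1 + h2
    · have h1 : vb = -1 := (Efn_eq_neg_one_iff _).2 hA
      rw [eca] at hB
      have h2 : va + vc = 0 := add_eq_zero_of_Efn ((Efn_eq_neg_one_iff _).2 hB)
      linear_combination h1 + h2
    · have h1 : vc = -1 := (Efn_eq_neg_one_iff _).2 hA
      rw [eba] at hB
      have h2 : va + vb = 0 := add_eq_zero_of_Efn ((Efn_eq_neg_one_iff _).2 hB)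
      linear_combination h1 + h2

theorem stmt14 (a b c : ℤ) (t t' : ℕ) (l l' : ℤ)
    (ha : 0 < a) (hac : a < c) (haodd : Odd a) (hcodd : Odd c)
    (hbeven : Even b) (hb : 0 < b)
    (hgcd : Int.gcd a (Int.gcd b c) = 1)
    (ht : 1 ≤ t) (ht' : 1 ≤ t') (hl : Odd l) (hl' : Odd l')
    (hbe : b = 2 ^ t * l) (hcae : c - a = 2 ^ t' * l') :
    (t = t' → maskZeroSet a b c =
      oddFracSet (2 * (Int.gcd a (c - b) : ℝ)) ∪
      oddFracSet (2 * (Int.gcd c (b - a) : ℝ)) ∪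
      oddFracSet (2 ^ (t + 1) * (Int.gcd l l' : ℝ))) ∧
    (t ≠ t' → maskZeroSet a b c =
      oddFracSet (2 * (Int.gcd a (c - b) : ℝ)) ∪
      oddFracSet (2 * (Int.gcd c (b - a) : ℝ))) := by
  have hcb : Odd (c - b) := by
    rcases hcodd with ⟨s, hs⟩; rcases hbeven with ⟨e, he⟩; exact ⟨s - e, by omega⟩
  have hba : Odd (b - a) := by
    rcases haodd with ⟨s, hs⟩; rcases hbeven with ⟨e, he⟩; exact ⟨e - s - 1, by omega⟩
  have hbR : ((b:ℤ):ℝ) = ((2^t * l : ℤ):ℝ) := by rw [hbe]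
  have hcaR : ((c - a : ℤ):ℝ) = ((2^t' * l' : ℤ):ℝ) := by rw [hcae]
  constructor
  · intro htt
    subst htt
    ext ξ
    rw [mask_mem_iff]
    simp only [Set.mem_union, oddFracSet, Set.mem_setOf_eq]
    rw [gcd_char a (c - b) haodd hcb ξ, gcd_char c (b - a) hcodd hba ξ,
      hbR, hcaR, gcd_char_pow t l l' hl hl' ξ]
    constructor
    · rintro (h | h | h)
      · exact Or.inl (Or.inl h)
      · exact Or.inr h
      · exact Or.inl (Or.inr h)
    · rintro ((h | h) | h)
      · exact Or.inl h
      · exact Or.inr (Or.inr h)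
      · exact Or.inr (Or.inl h)
  · intro htt
    ext ξ
    rw [mask_mem_iff]
    simp only [Set.mem_union, oddFracSet, Set.mem_setOf_eq]
    rw [gcd_char a (c - b) haodd hcb ξ, gcd_char c (b - a) hcodd hba ξ, hbR, hcaR]
    have hmid := no_sol t t' htt l l' hl hl' ξ
    constructor
    · rintro (h | h | h)
      · exact Or.inl h
      · exact absurd h hmid
      · exact Or.inr h
    · rintro (h | h)
      · exact Or.inl h
      · exact Or.inr (Or.inr h)

end
end

section
/- Let D = {0, a, b, c} with 0 < a < c odd, b even, gcd(a,b,c) = 1, and let μ = μ_{4,D}. If 0 ∈ Λ ⊂ ℝ is an orthogonal set for μ, then Λ \ {0} ⊆ Z₁ ∪ Z₃ or Λ \ {0} ⊆ Z₂ ∪ Z₃. -/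
open MeasureTheory Finset Polynomial
open scoped Classical

noncomputable section

open Complex

/-- If four unit complex numbers (one of them 1) sum to zero, one of the others is -1. -/
lemma four_units (z₁ z₂ z₃ : ℂ) (h₁ : ‖z₁‖ = 1) (h₂ : ‖z₂‖ = 1) (h₃ : ‖z₃‖ = 1)
    (hsum : 1 + z₁ + z₂ + z₃ = 0) : z₁ = -1 ∨ z₂ = -1 ∨ z₃ = -1 := by
  have c₁ : z₁ * (starRingEnd ℂ) z₁ = 1 := by
    rw [Complex.mul_conj]; norm_cast; rw [← Complex.sq_norm] at *
    simp [h₁]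
  have c₂ : z₂ * (starRingEnd ℂ) z₂ = 1 := by
    rw [Complex.mul_conj]; norm_cast; rw [← Complex.sq_norm] at *
    simp [h₂]
  have c₃ : z₃ * (starRingEnd ℂ) z₃ = 1 := by
    rw [Complex.mul_conj]; norm_cast; rw [← Complex.sq_norm] at *
    simp [h₃]
  have hconj : 1 + (starRingEnd ℂ) z₁ + (starRingEnd ℂ) z₂ + (starRingEnd ℂ) z₃ = 0 := by
    have := congrArg (starRingEnd ℂ) hsum
    simpa using this
  have key : (1 + z₁) * (1 + z₂) * (1 + z₃) = 0 := by
    linear_combination hsum + z₁*z₂*z₃*hconj - z₂*z₃*c₁ - z₁*z₃*c₂ - z₁*z₂*c₃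
  rcases mul_eq_zero.1 key with h | h
  · rcases mul_eq_zero.1 h with h | h
    · left; linear_combination h
    · right; left; linear_combination h
  · right; right; linear_combination h


open Complex

/-- exp(2πir) = -1 iff 2r is an odd integer. -/
lemma exp_eq_neg_one_iff' (r : ℝ) :
    Complex.exp (2 * (Real.pi : ℂ) * Complex.I * (r : ℂ)) = -1 ↔
      ∃ k : ℤ, Odd k ∧ (2 * r : ℝ) = k := by
  constructor
  · intro h
    have h1 : Complex.exp (2 * (Real.pi : ℂ) * Complex.I * (r : ℂ) + Real.pi * Complex.I) = 1 := by
      rw [Complex.exp_add, h, Complex.exp_pi_mul_I]; ring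
    rw [Complex.exp_eq_one_iff] at h1
    obtain ⟨n, hn⟩ := h1
    refine ⟨2 * n - 1, ⟨n - 1, by ring⟩, ?_⟩
    have hπ : (Real.pi : ℂ) * Complex.I ≠ 0 := by
      simp [Real.pi_ne_zero, Complex.I_ne_zero]
    have h2 : ((2 * r : ℝ) : ℂ) = ((2 * n - 1 : ℤ) : ℂ) := by
      have h3 : ((2 * r + 1 : ℝ) : ℂ) * ((Real.pi : ℂ) * Complex.I)
          = ((2 * n : ℤ) : ℂ) * ((Real.pi : ℂ) * Complex.I) := by
        push_cast
        linear_combination hn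
      have := mul_right_cancel₀ hπ h3
      push_cast at this ⊢
      linear_combination this
    exact_mod_cast h2
  · rintro ⟨k, ⟨j, hj⟩, hk⟩
    have : (2 : ℂ) * (Real.pi : ℂ) * Complex.I * (r : ℂ)
        = ((2 * j + 1 : ℤ) : ℂ) * (Real.pi * Complex.I) := by
      have : (2 * r : ℝ) = ((2 * j + 1 : ℤ) : ℝ) := by norm_num [hk, hj]
      have h2 : ((2 * r : ℝ) : ℂ) = ((2 * j + 1 : ℤ) : ℂ) := by exact_mod_cast this
      push_cast at h2 ⊢
      linear_combination (Real.pi : ℂ) * Complex.I * h2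
    rw [this]
    push_cast
    rw [add_mul, Complex.exp_add, one_mul, Complex.exp_pi_mul_I]
    rw [mul_comm ((2:ℂ)*(j:ℂ)) (Real.pi * Complex.I)]
    have : (Real.pi : ℂ) * Complex.I * (2 * (j:ℂ)) = (j : ℤ) * (2 * Real.pi * Complex.I) := by
      push_cast; ring
    rw [this, Complex.exp_int_mul_two_pi_mul_I]
    ring


/-- odd * 2^i = odd * 2^j implies i = j -/
lemma odd_pow_two_eq (x y : ℤ) (i j : ℕ) (hx : Odd x) (hy : Odd y)
    (h : x * 2 ^ i = y * 2 ^ j) : i = j := by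
  by_contra hne
  rcases Nat.lt_or_ge i j with hij | hij
  · have hpow : (2:ℤ) ^ j = 2 ^ (j - i) * 2 ^ i := by rw [← pow_add]; congr 1; omega
    have h2 : x = y * 2 ^ (j - i) :=
      mul_right_cancel₀ (pow_ne_zero i two_ne_zero) (by rw [h, hpow]; ring)
    have hdvd : (2:ℤ) ∣ x := h2 ▸ Dvd.dvd.mul_left (dvd_pow_self 2 (by omega)) y
    obtain ⟨w, hw⟩ := hdvd; obtain ⟨k, hk⟩ := hx; omega
  · have hij' : j < i := by omega
    have hpow : (2:ℤ) ^ i = 2 ^ (i - j) * 2 ^ j := by rw [← pow_add]; congr 1; omega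
    have h2 : y = x * 2 ^ (i - j) :=
      mul_right_cancel₀ (pow_ne_zero j two_ne_zero) (by rw [← h, hpow]; ring)
    have hdvd : (2:ℤ) ∣ y := h2 ▸ Dvd.dvd.mul_left (dvd_pow_self 2 (by omega)) x
    obtain ⟨w, hw⟩ := hdvd; obtain ⟨k, hk⟩ := hy; omega

/-- If 2dξ and 2d'ξ are odd integers with d = 2^s l, d' = 2^s l', l l' odd,
then ξ = m / (2^(s+1) gcd l l') with m odd. -/
lemma odd_rel_to_frac (s : ℕ) (l l' : ℤ) (hl : Odd l) (hl' : Odd l') (ξ : ℝ)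
    (A B : ℤ) (hA : Odd A) (hB : Odd B)
    (hAe : (2:ℝ) * ((2:ℝ) ^ s * (l : ℝ)) * ξ = A)
    (hBe : (2:ℝ) * ((2:ℝ) ^ s * (l' : ℝ)) * ξ = B) :
    ∃ m : ℤ, Odd m ∧ ξ = (m : ℝ) / ((2:ℝ) ^ (s+1) * (Int.gcd l l' : ℝ)) := by
  set g : ℤ := (Int.gcd l l' : ℤ) with hg
  have hl0 : l ≠ 0 := by rintro rfl; simp at hl
  have hg0 : g ≠ 0 := by
    simp only [hg, ne_eq, Int.natCast_eq_zero]
    intro h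
    exact hl0 (Int.gcd_eq_zero_iff.1 h).1
  have hgpos : 0 < g := lt_of_le_of_ne (Int.ofNat_nonneg _) (Ne.symm hg0)
  obtain ⟨u, v, huv⟩ : ∃ u v : ℤ, g = l * u + l' * v :=
    ⟨Int.gcdA l l', Int.gcdB l l', Int.gcd_eq_gcd_ab l l'⟩
  set m : ℤ := u * A + v * B with hm
  have key : (2:ℝ) ^ (s+1) * (g : ℝ) * ξ = (m : ℝ) := by
    have : ((g:ℝ)) = (l:ℝ) * u + (l':ℝ) * v := by exact_mod_cast congrArg (fun z : ℤ => (z:ℝ)) huv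
    rw [this, hm]
    push_cast
    have e1 : (2:ℝ) ^ (s+1) * (l:ℝ) * ξ = A := by rw [← hAe]; ring
    have e2 : (2:ℝ) ^ (s+1) * (l':ℝ) * ξ = B := by rw [← hBe]; ring
    linear_combination (u:ℝ) * e1 + (v:ℝ) * e2
  -- m is odd: A = (l/g) * m
  obtain ⟨l₁, hl₁⟩ : g ∣ l := Int.gcd_dvd_left l l'
  have hAm : A = l₁ * m := by
    have : (A : ℝ) = (l₁ : ℝ) * (m : ℝ) := by
      rw [← key, ← hAe]
      have : (l : ℝ) = (g:ℝ) * (l₁:ℝ) := by exact_mod_cast congrArg (fun z : ℤ => (z:ℝ)) hl₁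
      rw [this]; ring
    exact_mod_cast this
  have hmodd : Odd m := by
    rcases Int.even_or_odd m with he | ho
    · exfalso
      have : Even A := by rw [hAm]; exact he.mul_left _
      exact (Int.not_even_iff_odd.2 hA) this
    · exact ho
  refine ⟨m, hmodd, ?_⟩
  have hq : ((2:ℝ) ^ (s+1) * (g : ℝ)) ≠ 0 := by
    apply mul_ne_zero (by positivity)
    exact_mod_cast hg0
  have hgr : ((Int.gcd l l' : ℕ) : ℝ) = (g : ℝ) := by rw [hg]; push_cast; ring
  rw [hgr, eq_div_iff hq]
  linarith [key]


noncomputable def Echar (d : ℤ) (ξ : ℝ) : ℂ :=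
  Complex.exp (2 * (Real.pi : ℂ) * Complex.I * (d : ℂ) * (ξ : ℂ))

lemma norm_Echar (d : ℤ) (ξ : ℝ) : ‖Echar d ξ‖ = 1 := by
  have hrw : (2 * (Real.pi : ℂ) * Complex.I * (d : ℂ) * (ξ : ℂ))
      = ((2 * Real.pi * (d:ℝ) * ξ : ℝ) : ℂ) * Complex.I := by push_cast; ring
  rw [Echar, hrw, Complex.norm_exp_ofReal_mul_I]

lemma Echar_div (d e : ℤ) (ξ : ℝ) : Echar d ξ / Echar e ξ = Echar (d - e) ξ := by
  rw [Echar, Echar, Echar, ← Complex.exp_sub]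
  congr 1
  push_cast
  ring

lemma Echar_neg_one_iff (d : ℤ) (ξ : ℝ) :
    Echar d ξ = -1 ↔ ∃ k : ℤ, Odd k ∧ (2 * (d:ℝ) * ξ : ℝ) = k := by
  have hrw : (2 * (Real.pi : ℂ) * Complex.I * (d : ℂ) * (ξ : ℂ))
      = 2 * (Real.pi : ℂ) * Complex.I * (((d:ℝ) * ξ : ℝ) : ℂ) := by push_cast; ring
  rw [Echar, hrw, exp_eq_neg_one_iff']
  constructor
  · rintro ⟨k, hk, he⟩; exact ⟨k, hk, by rw [← he]; ring⟩
  · rintro ⟨k, hk, he⟩; exact ⟨k, hk, by rw [← he]; ring⟩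

lemma mask_zero_sub (a b c : ℤ) (t t' : ℕ) (l l' : ℤ)
    (haodd : Odd a) (hcodd : Odd c) (hbeven : Even b)
    (hl : Odd l) (hl' : Odd l')
    (hbe : b = 2 ^ t * l) (hcae : c - a = 2 ^ t' * l')
    (ξ : ℝ) (hξ : ξ ∈ maskZeroSet a b c) :
    ξ ∈ oddFracSet (2 * (Int.gcd a (c - b) : ℝ)) ∪
      oddFracSet (2 * (Int.gcd c (b - a) : ℝ)) ∪
      oddFracSet ((2:ℝ) ^ (t + 1) * (Int.gcd l l' : ℝ)) := by
  have hsum : (1 : ℂ) + Echar a ξ + Echar b ξ + Echar c ξ = 0 := hξ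
  have hEb0 : Echar b ξ ≠ 0 := Complex.exp_ne_zero _
  have hEa0 : Echar a ξ ≠ 0 := Complex.exp_ne_zero _
  rcases four_units _ _ _ (norm_Echar a ξ) (norm_Echar b ξ) (norm_Echar c ξ) hsum with
    h | h | h
  · -- E a = -1, so E (c - b) = -1
    have h2 : Echar (c - b) ξ = -1 := by
      rw [← Echar_div]
      have : Echar c ξ = -Echar b ξ := by linear_combination hsum - h
      rw [this]
      field_simp
    obtain ⟨A, hA, hAe⟩ := (Echar_neg_one_iff a ξ).1 h
    obtain ⟨B, hB, hBe⟩ := (Echar_neg_one_iff (c - b) ξ).1 h2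
    left; left
    obtain ⟨m, hm, hme⟩ := odd_rel_to_frac 0 a (c - b) haodd (hcodd.sub_even hbeven) ξ A B hA hB
      (by rw [← hAe]; ring) (by rw [← hBe]; push_cast; ring)
    refine ⟨m, hm, ?_⟩
    rw [hme]; norm_num
  · -- E b = -1, so E (c - a) = -1
    have h2 : Echar (c - a) ξ = -1 := by
      rw [← Echar_div]
      have : Echar c ξ = -Echar a ξ := by linear_combination hsum - h
      rw [this]
      field_simp
    obtain ⟨A, hA, hAe⟩ := (Echar_neg_one_iff b ξ).1 h
    obtain ⟨B, hB, hBe⟩ := (Echar_neg_one_iff (c - a) ξ).1 h2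
    right
    -- derive t' = t
    have hreal : (A : ℝ) * ((c : ℝ) - a) = (B : ℝ) * b := by
      rw [← hAe, ← hBe]; push_cast; ring
    have hint : A * (c - a) = B * b := by exact_mod_cast hreal
    have htt : t' = t := by
      have : (A * l') * 2 ^ t' = (B * l) * 2 ^ t := by
        rw [mul_assoc, mul_assoc, mul_comm (l') ((2:ℤ)^t'), mul_comm l ((2:ℤ)^t),
          ← hcae, ← hbe]
        linarith [hint]
      exact odd_pow_two_eq _ _ _ _ (hA.mul hl') (hB.mul hl) this
    obtain ⟨m, hm, hme⟩ := odd_rel_to_frac t l l' hl hl' ξ A B hA hB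
      (by rw [← hAe, hbe]; push_cast; ring)
      (by rw [← hBe]
          have : ((c : ℝ) - a) = 2 ^ t * (l' : ℝ) := by
            rw [htt] at hcae
            exact_mod_cast congrArg (fun z : ℤ => (z : ℝ)) hcae
          rw [← this]; push_cast; ring)
    exact ⟨m, hm, hme⟩
  · -- E c = -1, so E (b - a) = -1
    have h2 : Echar (b - a) ξ = -1 := by
      rw [← Echar_div]
      have : Echar b ξ = -Echar a ξ := by linear_combination hsum - h
      rw [this]
      field_simp
    obtain ⟨A, hA, hAe⟩ := (Echar_neg_one_iff c ξ).1 h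
    obtain ⟨B, hB, hBe⟩ := (Echar_neg_one_iff (b - a) ξ).1 h2
    left; right
    obtain ⟨m, hm, hme⟩ := odd_rel_to_frac 0 c (b - a) hcodd (hbeven.sub_odd haodd) ξ A B hA hB
      (by rw [← hAe]; ring) (by rw [← hBe]; push_cast; ring)
    refine ⟨m, hm, ?_⟩
    rw [hme]; norm_num


def charF (ξ x : ℝ) : ℂ := Complex.exp (2 * (Real.pi : ℂ) * Complex.I * (ξ : ℂ) * (x : ℂ))

lemma charF_cont (ξ : ℝ) : Continuous fun x : ℝ => charF ξ x := by
  unfold charF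
  exact Complex.continuous_exp.comp (by continuity)

lemma charF_norm (ξ x : ℝ) : ‖charF ξ x‖ = 1 := by
  have hrw : (2 * (Real.pi : ℂ) * Complex.I * (ξ : ℂ) * (x : ℂ))
      = ((2 * Real.pi * ξ * x : ℝ) : ℂ) * Complex.I := by push_cast; ring
  rw [charF, hrw, Complex.norm_exp_ofReal_mul_I]

lemma charF_integrable (μ : Measure ℝ) [IsFiniteMeasure μ] (ξ : ℝ) :
    Integrable (fun x => charF ξ x) μ := by
  refine (integrable_const (1:ℝ)).mono' (charF_cont ξ).aestronglyMeasurable ?_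
  exact Filter.Eventually.of_forall fun x => le_of_eq (charF_norm ξ x)

/-- The Fourier transform of μ. -/
def ftμ (μ : Measure ℝ) (ξ : ℝ) : ℂ := ∫ x, charF ξ x ∂μ

def Mfun (a b c : ℤ) (ξ : ℝ) : ℂ :=
  (1 : ℂ) + Complex.exp (2 * (Real.pi : ℂ) * Complex.I * (a : ℂ) * (ξ : ℂ))
      + Complex.exp (2 * (Real.pi : ℂ) * Complex.I * (b : ℂ) * (ξ : ℂ))
      + Complex.exp (2 * (Real.pi : ℂ) * Complex.I * (c : ℂ) * (ξ : ℂ))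

lemma mem_maskZeroSet_iff (a b c : ℤ) (ξ : ℝ) :
    ξ ∈ maskZeroSet a b c ↔ Mfun a b c ξ = 0 := Iff.rfl

def Ecoef (d : ℤ) (η : ℝ) : ℂ := Complex.exp (2 * (Real.pi : ℂ) * Complex.I * (d : ℂ) * (η : ℂ))

lemma charF_shift (ξ : ℝ) (d : ℤ) (x : ℝ) :
    charF ξ ((x + (d:ℝ)) / 4) = Ecoef d (ξ/4) * charF (ξ/4) x := by
  rw [charF, charF, Ecoef, ← Complex.exp_add]
  congr 1
  push_cast
  ring

lemma ft_step (a b c : ℤ) (h0a : (0:ℤ) ≠ a) (h0b : (0:ℤ) ≠ b) (h0c : (0:ℤ) ≠ c)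
    (hab : a ≠ b) (hac : a ≠ c) (hbc : b ≠ c)
    (μ : Measure ℝ) (hμ : IsSelfSimilarMeasure 4 ({0, a, b, c} : Finset ℤ) μ) (ξ : ℝ) :
    ftμ μ ξ = (1/4 : ℂ) * Mfun a b c (ξ/4) * ftμ μ (ξ/4) := by
  haveI hP : IsProbabilityMeasure μ := hμ.1
  set D : Finset ℤ := ({0, a, b, c} : Finset ℤ) with hD
  have hg : ∀ d : ℤ, Measurable (fun x : ℝ => (x + (d : ℝ)) / (4:ℕ)) := by
    intro d; fun_prop
  haveI hPm : ∀ d : ℤ, IsProbabilityMeasure (Measure.map (fun x : ℝ => (x + (d : ℝ)) / (4:ℕ)) μ) :=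
    fun d => Measure.isProbabilityMeasure_map (hg d).aemeasurable
  have hmeq := hμ.2
  have step1 : ftμ μ ξ
      = ((D.card : ENNReal)⁻¹).toReal • ∑ d ∈ D, ∫ x, charF ξ x
          ∂(Measure.map (fun x : ℝ => (x + (d : ℝ)) / (4:ℕ)) μ) := by
    rw [ftμ]
    conv_lhs => rw [hmeq]
    rw [integral_smul_measure, integral_finset_sum_measure]
    intro d _
    exact charF_integrable _ ξ
  have step2 : ∀ d : ℤ, (∫ x, charF ξ x
      ∂(Measure.map (fun x : ℝ => (x + (d : ℝ)) / (4:ℕ)) μ))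
      = Ecoef d (ξ/4) * ftμ μ (ξ/4) := by
    intro d
    rw [integral_map (hg d).aemeasurable (charF_cont ξ).aestronglyMeasurable]
    have : ∀ x : ℝ, charF ξ ((x + (d : ℝ)) / (4:ℕ)) = Ecoef d (ξ/4) * charF (ξ/4) x := by
      intro x
      have : ((4:ℕ):ℝ) = (4:ℝ) := by norm_num
      rw [this, charF_shift]
    simp_rw [this]
    rw [integral_const_mul]
    rfl
  have hd : D.card = 4 := by
    rw [hD]
    rw [Finset.card_insert_of_notMem (by simp [h0a, h0b, h0c]),
      Finset.card_insert_of_notMem (by simp [hab, hac]),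
      Finset.card_insert_of_notMem (by simp [hbc]), Finset.card_singleton]
  rw [step1]
  simp_rw [step2]
  rw [← Finset.sum_mul, hd]
  have hsum : ∑ d ∈ D, Ecoef d (ξ/4) = Mfun a b c (ξ/4) := by
    rw [hD, Finset.sum_insert (by simp [h0a, h0b, h0c]),
      Finset.sum_insert (by simp [hab, hac]),
      Finset.sum_insert (by simp [hbc]), Finset.sum_singleton]
    have h0 : Ecoef 0 (ξ/4) = 1 := by simp [Ecoef]
    rw [h0, Mfun, Ecoef, Ecoef, Ecoef]
    ring
  rw [hsum]
  have : (((4 : ℕ) : ENNReal)⁻¹).toReal = (1/4 : ℝ) := by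
    rw [ENNReal.toReal_inv]; norm_num
  rw [this, Complex.real_smul]
  push_cast
  ring

lemma ft_tendsto_one (μ : Measure ℝ) [IsProbabilityMeasure μ] (ξ : ℝ) :
    Filter.Tendsto (fun n : ℕ => ftμ μ (ξ / 4 ^ n)) Filter.atTop (nhds 1) := by
  have h1 : (1 : ℂ) = ∫ _x : ℝ, (1:ℂ) ∂μ := by simp
  rw [h1]
  apply tendsto_integral_of_dominated_convergence (bound := fun _ => (1:ℝ))
  · intro n; exact (charF_cont _).aestronglyMeasurable
  · exact integrable_const 1
  · intro n
    exact Filter.Eventually.of_forall fun x => le_of_eq (charF_norm _ x)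
  · apply Filter.Eventually.of_forall
    intro x
    have hξ : Filter.Tendsto (fun n : ℕ => ξ / 4 ^ n) Filter.atTop (nhds 0) := by
      have hpow : Filter.Tendsto (fun n : ℕ => ((1:ℝ)/4) ^ n) Filter.atTop (nhds 0) := by
        apply tendsto_pow_atTop_nhds_zero_of_lt_one <;> norm_num
      have := hpow.const_mul ξ
      simp only [mul_zero] at this
      convert this using 2 with n
      rw [div_pow, one_pow, div_eq_mul_inv, div_eq_mul_inv, one_mul]
    have hcont : Continuous fun r : ℝ => charF r x := by
      unfold charF
      exact Complex.continuous_exp.comp (by continuity)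
    have := (hcont.tendsto 0).comp hξ
    have h0 : charF 0 x = 1 := by simp [charF]
    rw [h0] at this
    exact this

lemma ft_zero_structure (a b c : ℤ) (h0a : (0:ℤ) ≠ a) (h0b : (0:ℤ) ≠ b) (h0c : (0:ℤ) ≠ c)
    (hab : a ≠ b) (hac : a ≠ c) (hbc : b ≠ c)
    (μ : Measure ℝ) (hμ : IsSelfSimilarMeasure 4 ({0, a, b, c} : Finset ℤ) μ) (ξ : ℝ)
    (h0 : ftμ μ ξ = 0) :
    ∃ n : ℕ, 1 ≤ n ∧ (ξ / 4 ^ n) ∈ maskZeroSet a b c := by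
  haveI : IsProbabilityMeasure μ := hμ.1
  by_contra hcon
  push_neg at hcon
  have hM : ∀ n : ℕ, 1 ≤ n → Mfun a b c (ξ / 4 ^ n) ≠ 0 := by
    intro n hn h
    exact hcon n hn h
  have hF : ∀ n : ℕ, ftμ μ (ξ / 4 ^ n) = 0 := by
    intro n
    induction n with
    | zero => simpa using h0
    | succ k ih =>
      have hstep := ft_step a b c h0a h0b h0c hab hac hbc μ hμ (ξ / 4 ^ k)
      have harg : ξ / 4 ^ k / 4 = ξ / 4 ^ (k+1) := by
        rw [div_div, ← pow_succ]
      rw [harg, ih] at hstep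
      rcases mul_eq_zero.1 hstep.symm with h | h
      · rcases mul_eq_zero.1 h with h | h
        · norm_num at h
        · exact absurd h (hM (k+1) (by omega))
      · exact h
  have htend := ft_tendsto_one μ ξ
  simp only [hF] at htend
  have := tendsto_nhds_unique htend tendsto_const_nhds
  norm_num at this



lemma odd_of_dvd_odd {d x : ℤ} (h : d ∣ x) (hx : Odd x) : Odd d := by
  rcases Int.even_or_odd d with he | ho
  · exfalso
    obtain ⟨k, hk⟩ := h
    obtain ⟨r, hr⟩ := he
    have : Even x := ⟨r * k, by rw [hk, hr]; ring⟩
    exact (Int.not_even_iff_odd.2 hx) this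
  · exact ho

lemma isCoprime_two_of_odd {p : ℤ} (hp : Odd p) : IsCoprime (p : ℤ) 2 := by
  rw [isCoprime_comm]
  rw [Int.prime_two.coprime_iff_not_dvd]
  intro ⟨k, hk⟩
  obtain ⟨s, hs⟩ := hp
  omega

lemma isCoprime_fourpow_of_odd {p : ℤ} (hp : Odd p) (n : ℕ) : IsCoprime (p : ℤ) (4 ^ n) := by
  have : (4:ℤ) ^ n = 2 ^ (2*n) := by rw [pow_mul]; norm_num
  rw [this]
  exact (isCoprime_two_of_odd hp).pow_right

example : True := trivial


lemma mem_Zsc_of_dvd (p₁ p₂ : ℕ) (hp₁ : 0 < p₁) (hp₂ : 0 < p₂) (hp₂o : Odd (p₂:ℤ))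
    (lam : ℝ) (n₁ : ℕ) (hn₁ : 1 ≤ n₁) (m₁ : ℤ) (hm₁ : Odd m₁)
    (hlam : lam = (4:ℝ) ^ n₁ * (m₁ : ℝ) / (2 * (p₁ : ℝ)))
    (hdvd : (p₁ : ℤ) ∣ m₁) : lam ∈ Zsc (2 * (p₂ : ℝ)) := by
  obtain ⟨k, hk⟩ := hdvd
  have hko : Odd k := by
    rcases Int.even_or_odd k with he | ho
    · exfalso
      obtain ⟨r, hr⟩ := he
      exact (Int.not_even_iff_odd.2 hm₁) ⟨(p₁:ℤ) * r, by rw [hk, hr]; ring⟩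
    · exact ho
  refine ⟨n₁, hn₁, k * p₂, hko.mul (hp₂o), ?_⟩
  have h₁ : ((p₁:ℝ)) ≠ 0 := by positivity
  have h₂ : ((p₂:ℝ)) ≠ 0 := by positivity
  rw [hlam, hk]
  push_cast
  field_simp

lemma key_dvd (p₁ p₂ p₃ t : ℕ) (hp₁ : 0 < p₁) (hp₂ : 0 < p₂) (hp₃ : 0 < p₃)
    (hp₁o : Odd (p₁:ℤ)) (hp₂o : Odd (p₂:ℤ))
    (h12 : IsCoprime (p₁:ℤ) (p₂:ℤ)) (h13 : IsCoprime (p₁:ℤ) (p₃:ℤ))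
    (lam₁ lam₂ : ℝ) (n₁ n₂ : ℕ) (m₁ m₂ : ℤ) (hm₁ : Odd m₁) (hm₂ : Odd m₂)
    (hlam1 : lam₁ = (4:ℝ) ^ n₁ * (m₁:ℝ) / (2 * (p₁:ℝ)))
    (hlam2 : lam₂ = (4:ℝ) ^ n₂ * (m₂:ℝ) / (2 * (p₂:ℝ)))
    (hδ : lam₁ - lam₂ ∈ Zsc (2 * (p₁:ℝ)) ∪ Zsc (2 * (p₂:ℝ)) ∪
      Zsc ((2:ℝ) ^ (t+1) * (p₃:ℝ))) :
    (p₁:ℤ) ∣ m₁ ∨ (p₂:ℤ) ∣ m₂ := by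
  have h₁ : ((p₁:ℝ)) ≠ 0 := by positivity
  have h₂ : ((p₂:ℝ)) ≠ 0 := by positivity
  have h₃ : ((p₃:ℝ)) ≠ 0 := by positivity
  set X : ℤ := 4 ^ n₁ * m₁ * p₂ - 4 ^ n₂ * m₂ * p₁ with hX
  have e1 : lam₁ * (2 * (p₁:ℝ)) = (4:ℝ) ^ n₁ * (m₁:ℝ) := by
    rw [hlam1]; field_simp
  have e2 : lam₂ * (2 * (p₂:ℝ)) = (4:ℝ) ^ n₂ * (m₂:ℝ) := by
    rw [hlam2]; field_simp
  rcases hδ with (hδ | hδ) | hδ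
  · -- q = 2 p₁ : conclude p₂ ∣ m₂
    obtain ⟨N, hN, m, hm, hme⟩ := hδ
    have e3 : (lam₁ - lam₂) * (2 * (p₁:ℝ)) = (4:ℝ) ^ N * (m:ℝ) := by
      rw [hme]; field_simp
    have hXr : ((X * (2 * p₁) : ℤ) : ℝ) = ((2 * p₁ * p₂ * 4 ^ N * m : ℤ) : ℝ) := by
      rw [hX]; push_cast
      linear_combination (-(2:ℝ) * (p₁:ℝ) * (p₂:ℝ)) * e1 + (2 * (p₁:ℝ) * (p₁:ℝ)) * e2 +
        (2 * (p₁:ℝ) * (p₂:ℝ)) * e3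
    have hXi : X * (2 * (p₁:ℤ)) = 2 * p₁ * p₂ * 4 ^ N * m := by exact_mod_cast hXr
    have hXeq : X = (p₂:ℤ) * (4 ^ N * m) := by
      have h2p : (2 * (p₁:ℤ)) ≠ 0 := by positivity
      apply mul_right_cancel₀ h2p
      rw [hXi]; ring
    have hdvd : (p₂:ℤ) ∣ m₂ * (4 ^ n₂ * p₁) := by
      have hd1 : (p₂:ℤ) ∣ X := ⟨4 ^ N * m, hXeq⟩
      have : m₂ * (4 ^ n₂ * (p₁:ℤ)) = 4 ^ n₁ * m₁ * p₂ - X := by rw [hX]; ring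
      rw [this]
      exact Dvd.dvd.sub ⟨4 ^ n₁ * m₁, by ring⟩ hd1
    right
    have hco : IsCoprime ((p₂:ℤ)) (4 ^ n₂ * (p₁:ℤ)) :=
      IsCoprime.mul_right (isCoprime_fourpow_of_odd hp₂o n₂) h12.symm
    exact hco.dvd_of_dvd_mul_right hdvd
  · -- q = 2 p₂ : conclude p₁ ∣ m₁
    obtain ⟨N, hN, m, hm, hme⟩ := hδ
    have e3 : (lam₁ - lam₂) * (2 * (p₂:ℝ)) = (4:ℝ) ^ N * (m:ℝ) := by
      rw [hme]; field_simp
    have hXr : ((X * (2 * p₂) : ℤ) : ℝ) = ((2 * p₁ * p₂ * 4 ^ N * m : ℤ) : ℝ) := by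
      rw [hX]; push_cast
      linear_combination (-(2:ℝ) * (p₂:ℝ) * (p₂:ℝ)) * e1 + (2 * (p₂:ℝ) * (p₁:ℝ)) * e2 +
        (2 * (p₁:ℝ) * (p₂:ℝ)) * e3
    have hXi : X * (2 * (p₂:ℤ)) = 2 * p₁ * p₂ * 4 ^ N * m := by exact_mod_cast hXr
    have hXeq : X = (p₁:ℤ) * (4 ^ N * m) := by
      have h2p : (2 * (p₂:ℤ)) ≠ 0 := by positivity
      apply mul_right_cancel₀ h2p
      rw [hXi]; ring
    have hdvd : (p₁:ℤ) ∣ m₁ * (4 ^ n₁ * p₂) := by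
      have hd1 : (p₁:ℤ) ∣ X := ⟨4 ^ N * m, hXeq⟩
      have : m₁ * (4 ^ n₁ * (p₂:ℤ)) = X + 4 ^ n₂ * m₂ * p₁ := by rw [hX]; ring
      rw [this]
      exact Dvd.dvd.add hd1 ⟨4 ^ n₂ * m₂, by ring⟩
    left
    have hco : IsCoprime ((p₁:ℤ)) (4 ^ n₁ * (p₂:ℤ)) :=
      IsCoprime.mul_right (isCoprime_fourpow_of_odd hp₁o n₁) h12
    exact hco.dvd_of_dvd_mul_right hdvd
  · -- q = 2^(t+1) p₃ : conclude p₁ ∣ m₁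
    obtain ⟨N, hN, m, hm, hme⟩ := hδ
    have e3 : (lam₁ - lam₂) * ((2:ℝ) ^ (t+1) * (p₃:ℝ)) = (4:ℝ) ^ N * (m:ℝ) := by
      rw [hme]; field_simp
    have hXr : ((X * (2 ^ (t+1) * p₃) : ℤ) : ℝ) = ((2 * p₁ * p₂ * 4 ^ N * m : ℤ) : ℝ) := by
      rw [hX]; push_cast
      linear_combination (-(2:ℝ) ^ (t+1) * (p₃:ℝ) * (p₂:ℝ)) * e1 +
        ((2:ℝ) ^ (t+1) * (p₃:ℝ) * (p₁:ℝ)) * e2 + (2 * (p₁:ℝ) * (p₂:ℝ)) * e3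
    have hXi : X * (2 ^ (t+1) * (p₃:ℤ)) = 2 * p₁ * p₂ * 4 ^ N * m := by exact_mod_cast hXr
    have hd1 : (p₁:ℤ) ∣ X * (2 ^ (t+1) * (p₃:ℤ)) := by
      rw [hXi]
      exact ⟨2 * p₂ * 4 ^ N * m, by ring⟩
    have hco : IsCoprime ((p₁:ℤ)) (2 ^ (t+1) * (p₃:ℤ)) :=
      IsCoprime.mul_right ((isCoprime_two_of_odd hp₁o).pow_right) h13
    have hd2 : (p₁:ℤ) ∣ X := hco.dvd_of_dvd_mul_right hd1
    have hdvd : (p₁:ℤ) ∣ m₁ * (4 ^ n₁ * p₂) := by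
      have : m₁ * (4 ^ n₁ * (p₂:ℤ)) = X + 4 ^ n₂ * m₂ * p₁ := by rw [hX]; ring
      rw [this]
      exact Dvd.dvd.add hd2 ⟨4 ^ n₂ * m₂, by ring⟩
    left
    have hco2 : IsCoprime ((p₁:ℤ)) (4 ^ n₁ * (p₂:ℤ)) :=
      IsCoprime.mul_right (isCoprime_fourpow_of_odd hp₁o n₁) h12
    exact hco2.dvd_of_dvd_mul_right hdvd



lemma expChar_mul_conj (l₁ l₂ x : ℝ) :
    expChar l₁ x * (starRingEnd ℂ) (expChar l₂ x) = charF (l₁ - l₂) x := by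
  rw [expChar, expChar, charF, ← Complex.exp_conj, ← Complex.exp_add]
  congr 1
  simp only [map_mul, Complex.conj_I, Complex.conj_ofReal, map_ofNat]
  push_cast
  ring

lemma ft_of_orth (μ : MeasureTheory.Measure ℝ) (Λ : Set ℝ) (horth : IsOrthogonalSetFor Λ μ)
    (l₁ l₂ : ℝ) (h₁ : l₁ ∈ Λ) (h₂ : l₂ ∈ Λ) (hne : l₁ ≠ l₂) : ftμ μ (l₁ - l₂) = 0 := by
  have h := horth l₁ h₁ l₂ h₂ hne
  rw [ftμ, ← h]
  apply MeasureTheory.integral_congr_ae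
  exact Filter.Eventually.of_forall fun x => (expChar_mul_conj l₁ l₂ x).symm

lemma oddFrac_div_pow (q x : ℝ) (hq : q ≠ 0) (n : ℕ) (hn : 1 ≤ n)
    (h : x / 4 ^ n ∈ oddFracSet q) : x ∈ Zsc q := by
  obtain ⟨m, hm, he⟩ := h
  refine ⟨n, hn, m, hm, ?_⟩
  have h4 : ((4:ℝ) ^ n) ≠ 0 := by positivity
  rw [div_eq_div_iff h4 hq] at he
  rw [eq_div_iff hq]
  linarith

lemma isCoprime_of_dvd_one (x y : ℤ) (h : (Int.gcd x y : ℤ) ∣ 1) : IsCoprime x y := by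
  rw [Int.isCoprime_iff_gcd_eq_one]
  have := Int.eq_one_of_dvd_one (Int.ofNat_nonneg _) h
  exact_mod_cast this


theorem stmt15 (a b c : ℤ) (t t' : ℕ) (l l' : ℤ)
    (ha : 0 < a) (hac : a < c) (haodd : Odd a) (hcodd : Odd c)
    (hbeven : Even b) (hb : 0 < b)
    (hgcd : Int.gcd a (Int.gcd b c) = 1)
    (ht : 1 ≤ t) (ht' : 1 ≤ t') (hl : Odd l) (hl' : Odd l')
    (hbe : b = 2 ^ t * l) (hcae : c - a = 2 ^ t' * l')
    (μ : Measure ℝ) (hμ : IsSelfSimilarMeasure 4 ({0, a, b, c} : Finset ℤ) μ)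
    (Λ : Set ℝ) (h0Λ : (0 : ℝ) ∈ Λ) (horth : IsOrthogonalSetFor Λ μ) :
    Λ \ {0} ⊆ Zsc (2 * (Int.gcd a (c - b) : ℝ)) ∪ Zsc (2 ^ (t + 1) * (Int.gcd l l' : ℝ)) ∨
    Λ \ {0} ⊆ Zsc (2 * (Int.gcd c (b - a) : ℝ)) ∪ Zsc (2 ^ (t + 1) * (Int.gcd l l' : ℝ)) := by
  classical
  -- abbreviations
  set p₁ : ℕ := Int.gcd a (c - b) with hp₁def
  set p₂ : ℕ := Int.gcd c (b - a) with hp₂def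
  set p₃ : ℕ := Int.gcd l l' with hp₃def
  -- basic distinctness
  have h0a : (0:ℤ) ≠ a := ne_of_lt ha
  have h0c : (0:ℤ) ≠ c := ne_of_lt (lt_trans ha hac)
  have h0b : (0:ℤ) ≠ b := ne_of_lt hb
  have hab : a ≠ b := fun h => (Int.not_even_iff_odd.2 haodd) (h ▸ hbeven)
  have hbc : b ≠ c := fun h => (Int.not_even_iff_odd.2 hcodd) (h ▸ hbeven)
  have hacne : a ≠ c := ne_of_lt hac
  -- divisibility facts
  have hp₁a : (p₁:ℤ) ∣ a := Int.gcd_dvd_left _ _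
  have hp₁cb : (p₁:ℤ) ∣ (c - b) := Int.gcd_dvd_right _ _
  have hp₂c : (p₂:ℤ) ∣ c := Int.gcd_dvd_left _ _
  have hp₂ba : (p₂:ℤ) ∣ (b - a) := Int.gcd_dvd_right _ _
  have hp₃l : (p₃:ℤ) ∣ l := Int.gcd_dvd_left _ _
  have hp₃l' : (p₃:ℤ) ∣ l' := Int.gcd_dvd_right _ _
  -- positivity
  have hl0 : l ≠ 0 := by rintro rfl; simp at hl
  have hp₁pos : 0 < p₁ := Int.gcd_pos_of_ne_zero_left _ (ne_of_gt ha)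
  have hp₂pos : 0 < p₂ := Int.gcd_pos_of_ne_zero_left _ (ne_of_gt (lt_trans ha hac))
  have hp₃pos : 0 < p₃ := Int.gcd_pos_of_ne_zero_left _ hl0
  -- oddness
  have hp₁o : Odd ((p₁:ℤ)) := odd_of_dvd_odd hp₁a haodd
  have hp₂o : Odd ((p₂:ℤ)) := odd_of_dvd_odd hp₂c hcodd
  have hp₃o : Odd ((p₃:ℤ)) := odd_of_dvd_odd hp₃l hl
  -- coprimality
  have hcop12 : IsCoprime ((p₁:ℤ)) ((p₂:ℤ)) := by
    apply isCoprime_of_dvd_one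
    set q : ℤ := (Int.gcd (p₁:ℤ) (p₂:ℤ) : ℤ) with hq
    have hqa : q ∣ a := dvd_trans (Int.gcd_dvd_left _ _) hp₁a
    have hqcb : q ∣ (c - b) := dvd_trans (Int.gcd_dvd_left _ _) hp₁cb
    have hqc : q ∣ c := dvd_trans (Int.gcd_dvd_right _ _) hp₂c
    have hqb : q ∣ b := by
      have : b = c - (c - b) := by ring
      rw [this]; exact dvd_sub hqc hqcb
    have h1 : q ∣ (Int.gcd b c : ℤ) := Int.dvd_coe_gcd hqb hqc
    have h2 : q ∣ (Int.gcd a (Int.gcd b c) : ℤ) := Int.dvd_coe_gcd hqa h1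
    rw [hgcd] at h2
    simpa using h2
  have hcop13 : IsCoprime ((p₁:ℤ)) ((p₃:ℤ)) := by
    apply isCoprime_of_dvd_one
    set q : ℤ := (Int.gcd (p₁:ℤ) (p₃:ℤ) : ℤ) with hq
    have hqa : q ∣ a := dvd_trans (Int.gcd_dvd_left _ _) hp₁a
    have hqcb : q ∣ (c - b) := dvd_trans (Int.gcd_dvd_left _ _) hp₁cb
    have hqb : q ∣ b := by
      rw [hbe]
      exact Dvd.dvd.mul_left (dvd_trans (Int.gcd_dvd_right _ _) hp₃l) _
    have hqc : q ∣ c := by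
      have : c = (c - b) + b := by ring
      rw [this]; exact dvd_add hqcb hqb
    have h1 : q ∣ (Int.gcd b c : ℤ) := Int.dvd_coe_gcd hqb hqc
    have h2 : q ∣ (Int.gcd a (Int.gcd b c) : ℤ) := Int.dvd_coe_gcd hqa h1
    rw [hgcd] at h2
    simpa using h2
  have hcop23 : IsCoprime ((p₂:ℤ)) ((p₃:ℤ)) := by
    apply isCoprime_of_dvd_one
    set q : ℤ := (Int.gcd (p₂:ℤ) (p₃:ℤ) : ℤ) with hq
    have hqc : q ∣ c := dvd_trans (Int.gcd_dvd_left _ _) hp₂c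
    have hqba : q ∣ (b - a) := dvd_trans (Int.gcd_dvd_left _ _) hp₂ba
    have hqb : q ∣ b := by
      rw [hbe]
      exact Dvd.dvd.mul_left (dvd_trans (Int.gcd_dvd_right _ _) hp₃l) _
    have hqa : q ∣ a := by
      have : a = b - (b - a) := by ring
      rw [this]; exact dvd_sub hqb hqba
    have h1 : q ∣ (Int.gcd b c : ℤ) := Int.dvd_coe_gcd hqb hqc
    have h2 : q ∣ (Int.gcd a (Int.gcd b c) : ℤ) := Int.dvd_coe_gcd hqa h1
    rw [hgcd] at h2
    simpa using h2
  -- membership in the three-fold union for any zero of the Fourier transform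
  have hq1 : (2 * (p₁:ℝ)) ≠ 0 := by positivity
  have hq2 : (2 * (p₂:ℝ)) ≠ 0 := by positivity
  have hq3 : ((2:ℝ) ^ (t+1) * (p₃:ℝ)) ≠ 0 := by positivity
  have hmem3 : ∀ x : ℝ, ftμ μ x = 0 →
      x ∈ Zsc (2 * (p₁:ℝ)) ∪ Zsc (2 * (p₂:ℝ)) ∪ Zsc ((2:ℝ) ^ (t+1) * (p₃:ℝ)) := by
    intro x hx
    obtain ⟨n, hn, hmask⟩ := ft_zero_structure a b c h0a h0b h0c hab hacne hbc μ hμ x hx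
    rcases mask_zero_sub a b c t t' l l' haodd hcodd hbeven hl hl' hbe hcae (x / 4 ^ n) hmask
      with (h | h) | h
    · exact Or.inl (Or.inl (oddFrac_div_pow _ x hq1 n hn h))
    · exact Or.inl (Or.inr (oddFrac_div_pow _ x hq2 n hn h))
    · exact Or.inr (oddFrac_div_pow _ x hq3 n hn h)
  have hftzero : ∀ lam ∈ Λ \ {0}, ftμ μ lam = 0 := by
    intro lam hlam
    have hne : lam ≠ 0 := hlam.2
    have := ft_of_orth μ Λ horth lam 0 hlam.1 h0Λ hne
    simpa using this
  -- the dichotomy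
  by_cases hcase : Λ \ {0} ⊆ Zsc (2 * (p₁ : ℝ)) ∪ Zsc (2 ^ (t + 1) * (p₃ : ℝ))
  · exact Or.inl hcase
  · right
    obtain ⟨lam₂, hlam₂mem, hlam₂not⟩ := Set.not_subset.1 hcase
    have hlam₂Z2 : lam₂ ∈ Zsc (2 * (p₂:ℝ)) := by
      rcases hmem3 lam₂ (hftzero lam₂ hlam₂mem) with (h | h) | h
      · exact absurd (Or.inl h) hlam₂not
      · exact h
      · exact absurd (Or.inr h) hlam₂not
    have hlam₂not1 : lam₂ ∉ Zsc (2 * (p₁:ℝ)) := fun h => hlam₂not (Or.inl h)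
    intro lam hlammem
    by_cases h2 : lam ∈ Zsc (2 * (p₂:ℝ))
    · exact Or.inl h2
    by_cases h3 : lam ∈ Zsc ((2:ℝ) ^ (t+1) * (p₃:ℝ))
    · exact Or.inr h3
    exfalso
    have hlamZ1 : lam ∈ Zsc (2 * (p₁:ℝ)) := by
      rcases hmem3 lam (hftzero lam hlammem) with (h | h) | h
      · exact h
      · exact absurd h h2
      · exact absurd h h3
    have hne : lam ≠ lam₂ := by
      rintro rfl
      exact hlam₂not1 hlamZ1
    have hδ0 : ftμ μ (lam - lam₂) = 0 :=
      ft_of_orth μ Λ horth lam lam₂ hlammem.1 hlam₂mem.1 hne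
    have hδ := hmem3 _ hδ0
    obtain ⟨n₁, hn₁, m₁, hm₁, he₁⟩ := hlamZ1
    obtain ⟨n₂, hn₂, m₂, hm₂, he₂⟩ := hlam₂Z2
    rcases key_dvd p₁ p₂ p₃ t hp₁pos hp₂pos hp₃pos hp₁o hp₂o hcop12 hcop13
      lam lam₂ n₁ n₂ m₁ m₂ hm₁ hm₂ he₁ he₂ hδ with hd | hd
    · exact h2 (mem_Zsc_of_dvd p₁ p₂ hp₁pos hp₂pos hp₂o lam n₁ hn₁ m₁ hm₁ he₁ hd)
    · exact hlam₂not1 (mem_Zsc_of_dvd p₂ p₁ hp₂pos hp₁pos hp₁o lam₂ n₂ hn₂ m₂ hm₂ he₂ hd)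

end
end
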